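/- arXiv:2404.17076 — 2 statements merged into one kernel-verified Lean document; each statement's English description precedes it below -/
import Mathlib

section
/- Let X be a set, g : X → X a map, S ⊆ X a set with g(S) ⊆ S, w : X → ℝ a function, u a real number with 0 < u ≤ 1 and u ≤ w(x) for all x ∈ S, and q ≥ 1 a natural number. Assume that for every x ∈ S there exists k with 1 ≤ k ≤ q such that the product w(x)·w(g(x))⋯w(g^{k−1}(x)) > 2. Then for every x ∈ S and every n ≥ 0 one has w(x)·w(g(x))⋯w(g^{n−1}(x)) ≥ 2^{⌊n/q⌋}·u^q. -/
open Finset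

/-- Block-decomposition argument for uniform expansion: if `g` maps `S` into itself,
the weight `w` satisfies `u ≤ w` on `S` with `0 < u ≤ 1`, and from each point of `S`
some block of length at most `q` has weight-product `> 2`, then the weight-product
along any orbit segment of length `n` is at least `2^⌊n/q⌋·u^q`. -/
theorem block_expansion {X : Type*} (g : X → X) (S : Set X) (hS : Set.MapsTo g S S)
    (w : X → ℝ) (u : ℝ) (hu0 : 0 < u) (hu1 : u ≤ 1) (hw : ∀ x ∈ S, u ≤ w x)
    (q : ℕ) (hq : 1 ≤ q)
    (hblock : ∀ x ∈ S, ∃ k : ℕ, 1 ≤ k ∧ k ≤ q ∧ 2 < ∏ i ∈ Finset.range k, w (g^[i] x)) :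
    ∀ x ∈ S, ∀ n : ℕ, 2 ^ (n / q) * u ^ q ≤ ∏ i ∈ Finset.range n, w (g^[i] x) := by
  intro x hx n
  induction n using Nat.strong_induction_on generalizing x with
  | _ n ih =>
    by_cases hn : n < q
    · have h0 : n / q = 0 := Nat.div_eq_of_lt hn
      rw [h0, pow_zero, one_mul]
      calc u ^ q ≤ u ^ n := pow_le_pow_of_le_one hu0.le hu1 hn.le
        _ = ∏ _i ∈ Finset.range n, u := by rw [prod_const, card_range]
        _ ≤ ∏ i ∈ Finset.range n, w (g^[i] x) :=
            Finset.prod_le_prod (fun i _ => hu0.le)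
              (fun i _ => hw _ (hS.iterate i hx))
    · push_neg at hn
      obtain ⟨k, hk1, hkq, hkprod⟩ := hblock x hx
      have hkn : k ≤ n := hkq.trans hn
      have hrest := ih (n - k) (by omega) (g^[k] x) (hS.iterate k hx)
      have hrestpos : (0:ℝ) < ∏ i ∈ Finset.range (n - k), w (g^[i] (g^[k] x)) :=
        lt_of_lt_of_le (by positivity) hrest
      have hsplit : ∏ i ∈ Finset.range n, w (g^[i] x)
          = (∏ i ∈ Finset.range k, w (g^[i] x)) *
            ∏ i ∈ Finset.range (n - k), w (g^[i] (g^[k] x)) := by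
        obtain ⟨m, rfl⟩ : ∃ m, n = k + m := ⟨n - k, by omega⟩
        rw [Nat.add_sub_cancel_left, Finset.prod_range_add]
        congr 1
        refine Finset.prod_congr rfl fun i _ => ?_
        rw [add_comm, Function.iterate_add_apply]
      have hdiv : n / q ≤ (n - k) / q + 1 := by
        have : n ≤ (n - k) + q := by omega
        calc n / q ≤ ((n - k) + q) / q := Nat.div_le_div_right this
          _ = (n - k) / q + 1 := Nat.add_div_right _ hq
      calc 2 ^ (n / q) * u ^ q ≤ 2 ^ ((n - k) / q + 1) * u ^ q := by
            have : (2:ℝ) ^ (n / q) ≤ 2 ^ ((n - k) / q + 1) :=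
              pow_le_pow_right₀ one_le_two hdiv
            nlinarith [pow_pos hu0 q]
        _ = 2 * (2 ^ ((n - k) / q) * u ^ q) := by ring
        _ ≤ 2 * ∏ i ∈ Finset.range (n - k), w (g^[i] (g^[k] x)) := by
            nlinarith
        _ ≤ (∏ i ∈ Finset.range k, w (g^[i] x)) *
            ∏ i ∈ Finset.range (n - k), w (g^[i] (g^[k] x)) :=
            mul_le_mul_of_nonneg_right hkprod.le hrestpos.le
        _ = ∏ i ∈ Finset.range n, w (g^[i] x) := hsplit.symm
end

section
/- For every z ∈ ℂ with Re(z) ≤ −(ℓ+3) one has Re(f_c(z)) ≤ ℓ·Re(z) + ℓ + 2 ≤ Re(z) − 1; consequently, by induction, Re(f_c^{n}(z)) ≤ Re(z) − n for every n ≥ 0, so the real parts of the orbit of z tend to −∞. In particular the left half-plane {Re(z) ≤ −(ℓ+3)} is forward invariant under f_c. -/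
/-- For every `z` with `Re z ≤ −(ℓ+3)` one has
`Re (f_c z) ≤ ℓ·Re z + ℓ + 2 ≤ Re z − 1`; consequently `Re (f_c^[n] z) ≤ Re z − n` for
every `n ≥ 0`, so the real parts of the orbit tend to `−∞`. In particular the half-plane
`{Re z ≤ −(ℓ+3)}` is forward invariant under `f_c`. -/
theorem left_half_plane_invariant (ℓ : ℕ) (hℓ : 2 ≤ ℓ) (c : ℂ) (hc : ‖c - ℓ‖ < 1)
    (f : ℂ → ℂ)
    (hf : ∀ z : ℂ, f z = (ℓ : ℂ) * z + c - ((ℓ : ℂ) - 1) * Complex.log c - Complex.exp z) :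
    ∀ z : ℂ, z.re ≤ -((ℓ : ℝ) + 3) →
      (f z).re ≤ (ℓ : ℝ) * z.re + ℓ + 2 ∧
      (ℓ : ℝ) * z.re + ℓ + 2 ≤ z.re - 1 ∧
      (∀ n : ℕ, (f^[n] z).re ≤ z.re - n) ∧
      (f z).re ≤ -((ℓ : ℝ) + 3) := by
  have hℓ1 : (1 : ℝ) ≤ (ℓ : ℝ) - 1 := by
    have : (2 : ℝ) ≤ (ℓ : ℝ) := by exact_mod_cast hℓ
    linarith
  -- c.re ≤ ℓ + 1
  have hcre : c.re ≤ (ℓ : ℝ) + 1 := by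
    have h1 : (c - ℓ).re ≤ ‖c - ℓ‖ := Complex.re_le_norm _
    have h2 : (c - ℓ).re = c.re - ℓ := by simp
    linarith
  -- log |c| ≥ 0
  have habs : (1 : ℝ) ≤ ‖c‖ := by
    have h1 : ‖(ℓ : ℂ)‖ - ‖c - ℓ‖ ≤ ‖c‖ := by
      have h4 := norm_add_le c ((ℓ : ℂ) - c)
      have h3 : ‖(ℓ : ℂ) - c‖ = ‖c - ℓ‖ := by
        exact norm_sub_rev _ _
      rw [show c + ((ℓ : ℂ) - c) = (ℓ : ℂ) by ring] at h4
      linarith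
    have h2 : ‖(ℓ : ℂ)‖ = (ℓ : ℝ) := by
      simp
    have : (2 : ℝ) ≤ (ℓ : ℝ) := by exact_mod_cast hℓ
    linarith
  have hlog : 0 ≤ Real.log ‖c‖ := Real.log_nonneg habs
  -- key bound
  have key : ∀ w : ℂ, w.re ≤ -((ℓ : ℝ) + 3) → (f w).re ≤ (ℓ : ℝ) * w.re + ℓ + 2 := by
    intro w hw
    have hre : (f w).re = (ℓ : ℝ) * w.re + c.re - ((ℓ : ℝ) - 1) * Real.log ‖c‖
        - Real.exp w.re * Real.cos w.im := by
      rw [hf w]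
      simp [Complex.add_re, Complex.sub_re, Complex.mul_re, Complex.exp_re, Complex.log_re]
    rw [hre]
    have hwe : Real.exp w.re ≤ 1 := by
      rw [show (1 : ℝ) = Real.exp 0 by simp]
      apply Real.exp_le_exp.2
      have : (0 : ℝ) ≤ (ℓ : ℝ) + 3 := by positivity
      linarith
    have hcos : -1 ≤ Real.cos w.im := Real.neg_one_le_cos w.im
    have hexp_pos : 0 < Real.exp w.re := Real.exp_pos _
    have h1 : -(Real.exp w.re * Real.cos w.im) ≤ 1 := by
      nlinarith
    have h2 : 0 ≤ ((ℓ : ℝ) - 1) * Real.log ‖c‖ := by positivity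
    linarith
  intro z hz
  have hstep : ∀ w : ℂ, w.re ≤ -((ℓ : ℝ) + 3) →
      (f w).re ≤ w.re - 1 ∧ (f w).re ≤ -((ℓ : ℝ) + 3) := by
    intro w hw
    have h1 := key w hw
    have h2 : (ℓ : ℝ) * w.re + ℓ + 2 ≤ w.re - 1 := by
      have : ((ℓ : ℝ) - 1) * w.re ≤ ((ℓ : ℝ) - 1) * (-((ℓ : ℝ) + 3)) := by
        apply mul_le_mul_of_nonneg_left hw (by linarith)
      nlinarith
    exact ⟨by linarith, by linarith⟩
  refine ⟨key z hz, ?_, ?_, (hstep z hz).2⟩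
  · have : ((ℓ : ℝ) - 1) * z.re ≤ ((ℓ : ℝ) - 1) * (-((ℓ : ℝ) + 3)) := by
      apply mul_le_mul_of_nonneg_left hz (by linarith)
    nlinarith
  · intro n
    induction n with
    | zero => simp
    | succ n ih =>
      have hinv : ∀ m : ℕ, (f^[m] z).re ≤ -((ℓ : ℝ) + 3) := by
        intro m
        induction m with
        | zero => simpa using hz
        | succ m ihm =>
          rw [Function.iterate_succ_apply']
          exact (hstep _ ihm).2
      rw [Function.iterate_succ_apply']
      have := (hstep _ (hinv n)).1
      push_cast
      linarith
end
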